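/- If an instance (v, c) has a unique abductive explanation X, then every feature i ∈ X forms a singleton contrastive explanation ({i} is contrastive), i.e., each feature in X is a but-for cause. -/
import Mathlib

lemma stmt_13_aux {F : Type*} [DecidableEq F] (P : Finset F → Prop) (Y : Finset F)
    (hY : P Y) : ∃ X' ⊆ Y, P X' ∧ ∀ X'' ⊂ X', ¬ P X'' := by
  classical
  induction Y using Finset.strongInductionOn with
  | _ Y ih =>
    by_cases hmin : ∀ X'' ⊂ Y, ¬ P X''
    · exact ⟨Y, le_refl Y, hY, hmin⟩
    · push_neg at hmin
      obtain ⟨Z, hZ, hPZ⟩ := hmin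
      obtain ⟨X', hX'Z, h1, h2⟩ := ih Z hZ hPZ
      exact ⟨X', hX'Z.trans hZ.subset, h1, h2⟩

/-- if an instance has a unique abductive explanation X, then every
feature in X is a but-for cause, i.e., each singleton {i} with i ∈ X is
contrastive. -/
theorem stmt_13 {F : Type*} [Fintype F] [DecidableEq F] {D : F → Type*}
    [∀ i, Nontrivial (D i)] {K : Type*}
    (f : (∀ i, D i) → K) (hnc : ∃ a b, f a ≠ f b)
    (v : ∀ i, D i) (c : K) (hv : f v = c) (X : Finset F)
    -- X is an abductive explanation
    (hXs : ∀ x : ∀ i, D i, (∀ i ∈ X, x i = v i) → f x = c)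
    (hXm : ∀ X' : Finset F, X' ⊂ X →
      ¬ (∀ x : ∀ i, D i, (∀ i ∈ X', x i = v i) → f x = c))
    -- X is the unique abductive explanation
    (huniq : ∀ X' : Finset F,
      ((∀ x : ∀ i, D i, (∀ i ∈ X', x i = v i) → f x = c) ∧
        ∀ X'' : Finset F, X'' ⊂ X' →
          ¬ (∀ x : ∀ i, D i, (∀ i ∈ X'', x i = v i) → f x = c)) → X' = X) :
    ∀ i ∈ X, ∃ x : ∀ i, D i, (∀ j ∉ ({i} : Finset F), x j = v j) ∧ f x ≠ c := by
  classical
  intro i hi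
  by_contra h
  push_neg at h
  -- Y := univ.erase i is sufficient
  have hY : ∀ x : ∀ i, D i, (∀ j ∈ Finset.univ.erase i, x j = v j) → f x = c := by
    intro x hx
    exact h x (fun j hj => hx j (Finset.mem_erase.mpr ⟨by simpa using hj, Finset.mem_univ j⟩))
  obtain ⟨X', hsub, h1, h2⟩ := stmt_13_aux
    (fun S => ∀ x : ∀ i, D i, (∀ j ∈ S, x j = v j) → f x = c) (Finset.univ.erase i) hY
  have hXX : X' = X := huniq X' ⟨h1, h2⟩
  have : i ∈ Finset.univ.erase i := hsub (hXX ▸ hi)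
  simp at this
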